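/- The group G has exactly 17 conjugacy classes. Specifically: the conjugacy class of the identity I is {I}; the conjugacy class of −I is {−I}; for each m ∈ {0,…,4} the conjugacy class of T_m is {T_m, −T_m}; and for each pair 0 ≤ m < n ≤ 4 the conjugacy class of R_{mn} = T_m T_n is {R_{mn}, −R_{mn}}. -/
import Mathlib


open Matrix Complex

noncomputable def T : Fin 5 → Matrix (Fin 4) (Fin 4) ℂ :=
  ![!![1,0,0,0; 0,-1,0,0; 0,0,1,0; 0,0,0,-1],
    !![0,I,0,0; -I,0,0,0; 0,0,0,-I; 0,0,I,0],
    !![0,1,0,0; 1,0,0,0; 0,0,0,1; 0,0,1,0],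
    !![0,0,0,1; 0,0,-1,0; 0,-1,0,0; 1,0,0,0],
    !![0,0,0,I; 0,0,-I,0; 0,I,0,0; -I,0,0,0]]

/-- The subgroup of `GL(4,ℂ)` generated by `T 0, …, T 4`. -/
noncomputable def Ggrp : Subgroup ((Matrix (Fin 4) (Fin 4) ℂ)ˣ) :=
  Subgroup.closure {g | ∃ m : Fin 5, (g : Matrix (Fin 4) (Fin 4) ℂ) = T m}

/-- The underlying matrix of an element of `G`. -/
noncomputable def mat (v : Ggrp) : Matrix (Fin 4) (Fin 4) ℂ :=
  ((v : (Matrix (Fin 4) (Fin 4) ℂ)ˣ) : Matrix (Fin 4) (Fin 4) ℂ)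


/-! ### Auxiliary: an abstract model of the group -/

section AuxCliff

open GaussianInt

/-- Abstract model: sign `s` and exponent vector `(a,b,c,d)` of `T₀,T₁,T₂,T₃`. -/
structure Gf where
  s : ZMod 2
  a : ZMod 2
  b : ZMod 2
  c : ZMod 2
  d : ZMod 2
deriving DecidableEq, Fintype

instance : Mul Gf := ⟨fun x y => ⟨x.s + y.s + (x.b*y.a + x.c*(y.a+y.b) + x.d*(y.a+y.b+y.c)),
    x.a+y.a, x.b+y.b, x.c+y.c, x.d+y.d⟩⟩
instance : One Gf := ⟨⟨0,0,0,0,0⟩⟩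
instance : Inv Gf := ⟨fun x => ⟨x.s + (x.b*x.a + x.c*(x.a+x.b) + x.d*(x.a+x.b+x.c)), x.a, x.b, x.c, x.d⟩⟩

lemma Gf.mul_def (x y : Gf) : x * y = ⟨x.s + y.s + (x.b*y.a + x.c*(y.a+y.b) + x.d*(y.a+y.b+y.c)),
    x.a+y.a, x.b+y.b, x.c+y.c, x.d+y.d⟩ := rfl

instance : Group Gf where
  mul_assoc x y z := by
    simp only [Gf.mul_def]
    rw [Gf.mk.injEq]
    refine ⟨by ring, by ring, by ring, by ring, by ring⟩
  one_mul := by decide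
  mul_one := by decide
  inv_mul_cancel := by decide

instance : DecidableRel (IsConj : Gf → Gf → Prop) :=
  fun a b => decidable_of_iff (∃ c : Gf, c * a * c⁻¹ = b) (isConj_iff).symm

theorem Gf.card17 : Nat.card (ConjClasses Gf) = 17 := by
  rw [Nat.card_eq_fintype_card]; decide

/-- The five generators. -/
def gen : Fin 5 → Gf := ![⟨0,1,0,0,0⟩, ⟨0,0,1,0,0⟩, ⟨0,0,0,1,0⟩, ⟨0,0,0,0,1⟩, ⟨0,1,1,1,1⟩]

/-- The central element of order 2. -/
def nn : Gf := ⟨1,0,0,0,0⟩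

lemma hnn : (gen 0 * gen 1) * (gen 0 * gen 1) = nn := by decide
lemma nnsq : nn * nn = 1 := by decide
lemma geninv : ∀ m : Fin 5, (gen m)⁻¹ = gen m := by decide
lemma dnn : ∀ x : Gf, x = nn ^ x.s.val * gen 0 ^ x.a.val * gen 1 ^ x.b.val *
    gen 2 ^ x.c.val * gen 3 ^ x.d.val := by decide
lemma hconj1 : ∀ k m : Fin 5, gen k * gen m * (gen k)⁻¹ = gen m ∨
    gen k * gen m * (gen k)⁻¹ = nn * gen m := by decide
lemma hconj2 : ∀ k m n : Fin 5, gen k * (gen m * gen n) * (gen k)⁻¹ = gen m * gen n ∨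
    gen k * (gen m * gen n) * (gen k)⁻¹ = nn * (gen m * gen n) := by decide
lemma hflip1 : ∀ m : Fin 5, ∃ k, gen k * gen m * (gen k)⁻¹ = nn * gen m := by decide
lemma hflip2 : ∀ m n : Fin 5, m ≠ n → ∃ k,
    gen k * (gen m * gen n) * (gen k)⁻¹ = nn * (gen m * gen n) := by decide

lemma hgenmem (x : Gf) : x ∈ Subgroup.closure (Set.range gen) := by
  have hm : ∀ m : Fin 5, gen m ∈ Subgroup.closure (Set.range gen) :=
    fun m => Subgroup.subset_closure ⟨m, rfl⟩
  have hnnm : nn ∈ Subgroup.closure (Set.range gen) := by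
    rw [← hnn]; exact mul_mem (mul_mem (hm 0) (hm 1)) (mul_mem (hm 0) (hm 1))
  rw [dnn x]
  exact mul_mem (mul_mem (mul_mem (mul_mem (pow_mem hnnm _) (pow_mem (hm 0) _))
    (pow_mem (hm 1) _)) (pow_mem (hm 2) _)) (pow_mem (hm 3) _)

/-! ### Matrices over the Gaussian integers -/

abbrev MZ := Matrix (Fin 4) (Fin 4) GaussianInt

/-- Fast matrix multiplication. -/
def mmul (A B : MZ) : MZ := Matrix.of fun i j => A i 0 * B 0 j + A i 1 * B 1 j + A i 2 * B 2 j + A i 3 * B 3 j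

lemma mmul_eq (A B : MZ) : mmul A B = A * B := by
  apply Matrix.ext
  intro i j
  rw [Matrix.mul_apply, Fin.sum_univ_four]
  rfl

/-- Fast matrix equality. -/
def meqb (A B : MZ) : Prop :=
  A 0 0 = B 0 0 ∧ A 0 1 = B 0 1 ∧ A 0 2 = B 0 2 ∧ A 0 3 = B 0 3 ∧
  A 1 0 = B 1 0 ∧ A 1 1 = B 1 1 ∧ A 1 2 = B 1 2 ∧ A 1 3 = B 1 3 ∧
  A 2 0 = B 2 0 ∧ A 2 1 = B 2 1 ∧ A 2 2 = B 2 2 ∧ A 2 3 = B 2 3 ∧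
  A 3 0 = B 3 0 ∧ A 3 1 = B 3 1 ∧ A 3 2 = B 3 2 ∧ A 3 3 = B 3 3

instance (A B : MZ) : Decidable (meqb A B) := by unfold meqb; infer_instance

lemma meqb_eq {A B : MZ} (h : meqb A B) : A = B := by
  obtain ⟨h1,h2,h3,h4,h5,h6,h7,h8,h9,h10,h11,h12,h13,h14,h15,h16⟩ := h
  apply Matrix.ext
  intro i j
  fin_cases i <;> fin_cases j <;>
    first
    | exact h1 | exact h2 | exact h3 | exact h4 | exact h5 | exact h6 | exact h7 | exact h8
    | exact h9 | exact h10 | exact h11 | exact h12 | exact h13 | exact h14 | exact h15 | exact h16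
def B0 : MZ := !![1, 0, 0, 0; 0, 1, 0, 0; 0, 0, 1, 0; 0, 0, 0, 1]
def B1 : MZ := !![1, 0, 0, 0; 0, (-1), 0, 0; 0, 0, 1, 0; 0, 0, 0, (-1)]
def B2 : MZ := !![0, (⟨0,1⟩), 0, 0; (⟨0,-1⟩), 0, 0, 0; 0, 0, 0, (⟨0,-1⟩); 0, 0, (⟨0,1⟩), 0]
def B3 : MZ := !![0, 1, 0, 0; 1, 0, 0, 0; 0, 0, 0, 1; 0, 0, 1, 0]
def B4 : MZ := !![0, 0, 0, 1; 0, 0, (-1), 0; 0, (-1), 0, 0; 1, 0, 0, 0]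
def B5 : MZ := !![0, 0, 0, (⟨0,1⟩); 0, 0, (⟨0,-1⟩), 0; 0, (⟨0,1⟩), 0, 0; (⟨0,-1⟩), 0, 0, 0]
def B6 : MZ := !![0, (⟨0,1⟩), 0, 0; (⟨0,1⟩), 0, 0, 0; 0, 0, 0, (⟨0,-1⟩); 0, 0, (⟨0,-1⟩), 0]
def B7 : MZ := !![0, 1, 0, 0; (-1), 0, 0, 0; 0, 0, 0, 1; 0, 0, (-1), 0]
def B8 : MZ := !![0, 0, 0, 1; 0, 0, 1, 0; 0, (-1), 0, 0; (-1), 0, 0, 0]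
def B9 : MZ := !![0, 0, 0, (⟨0,1⟩); 0, 0, (⟨0,1⟩), 0; 0, (⟨0,1⟩), 0, 0; (⟨0,1⟩), 0, 0, 0]
def B10 : MZ := !![(⟨0,1⟩), 0, 0, 0; 0, (⟨0,-1⟩), 0, 0; 0, 0, (⟨0,-1⟩), 0; 0, 0, 0, (⟨0,1⟩)]
def B11 : MZ := !![0, 0, (⟨0,-1⟩), 0; 0, 0, 0, (⟨0,-1⟩); (⟨0,-1⟩), 0, 0, 0; 0, (⟨0,-1⟩), 0, 0]
def B12 : MZ := !![0, 0, 1, 0; 0, 0, 0, 1; (-1), 0, 0, 0; 0, (-1), 0, 0]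
def B13 : MZ := !![0, 0, (-1), 0; 0, 0, 0, 1; 1, 0, 0, 0; 0, (-1), 0, 0]
def B14 : MZ := !![0, 0, (⟨0,-1⟩), 0; 0, 0, 0, (⟨0,1⟩); (⟨0,-1⟩), 0, 0, 0; 0, (⟨0,1⟩), 0, 0]
def B15 : MZ := !![(⟨0,-1⟩), 0, 0, 0; 0, (⟨0,-1⟩), 0, 0; 0, 0, (⟨0,1⟩), 0; 0, 0, 0, (⟨0,1⟩)]
def uval (g : Gf) : MZ :=
  if g = ⟨0,0,0,0,0⟩ then B0 else 
  if g = ⟨0,0,0,0,1⟩ then B4 else 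
  if g = ⟨0,0,0,1,0⟩ then B3 else 
  if g = ⟨0,0,0,1,1⟩ then B13 else 
  if g = ⟨0,0,1,0,0⟩ then B2 else 
  if g = ⟨0,0,1,0,1⟩ then B11 else 
  if g = ⟨0,0,1,1,0⟩ then B10 else 
  if g = ⟨0,0,1,1,1⟩ then B9 else 
  if g = ⟨0,1,0,0,0⟩ then B1 else 
  if g = ⟨0,1,0,0,1⟩ then B8 else 
  if g = ⟨0,1,0,1,0⟩ then B7 else 
  if g = ⟨0,1,0,1,1⟩ then -B12 else 
  if g = ⟨0,1,1,0,0⟩ then B6 else 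
  if g = ⟨0,1,1,0,1⟩ then B14 else 
  if g = ⟨0,1,1,1,0⟩ then -B15 else 
  if g = ⟨0,1,1,1,1⟩ then B5 else 
  if g = ⟨1,0,0,0,0⟩ then -B0 else 
  if g = ⟨1,0,0,0,1⟩ then -B4 else 
  if g = ⟨1,0,0,1,0⟩ then -B3 else 
  if g = ⟨1,0,0,1,1⟩ then -B13 else 
  if g = ⟨1,0,1,0,0⟩ then -B2 else 
  if g = ⟨1,0,1,0,1⟩ then -B11 else 
  if g = ⟨1,0,1,1,0⟩ then -B10 else 
  if g = ⟨1,0,1,1,1⟩ then -B9 else 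
  if g = ⟨1,1,0,0,0⟩ then -B1 else 
  if g = ⟨1,1,0,0,1⟩ then -B8 else 
  if g = ⟨1,1,0,1,0⟩ then -B7 else 
  if g = ⟨1,1,0,1,1⟩ then B12 else 
  if g = ⟨1,1,1,0,0⟩ then -B6 else 
  if g = ⟨1,1,1,0,1⟩ then -B14 else 
  if g = ⟨1,1,1,1,0⟩ then B15 else 
  if g = ⟨1,1,1,1,1⟩ then -B5 else B0

set_option maxRecDepth 40000 in
set_option maxHeartbeats 10000000 in
theorem huv0 : ∀ m : Fin 5, ∀ y : Gf, meqb (mmul (uval (gen m)) (uval y)) (uval (gen m * y)) := by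
  decide

lemma huv_gen (m : Fin 5) (y : Gf) : uval (gen m * y) = uval (gen m) * uval y := by
  rw [← mmul_eq]; exact (meqb_eq (huv0 m y)).symm

lemma uval_one : uval 1 = 1 := by decide

set_option maxHeartbeats 1000000 in
lemma uval_nn : uval nn = -1 := by decide

set_option maxHeartbeats 1000000 in
lemma hker : ∀ x : Gf, uval x = 1 → x = 1 := by decide

set_option maxHeartbeats 1000000 in
lemma ugen0 : uval (gen 0) = B1 := by decide
set_option maxHeartbeats 1000000 in
lemma ugen1 : uval (gen 1) = B2 := by decide
set_option maxHeartbeats 1000000 in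
lemma ugen2 : uval (gen 2) = B3 := by decide
set_option maxHeartbeats 1000000 in
lemma ugen3 : uval (gen 3) = B4 := by decide
set_option maxHeartbeats 1000000 in
lemma ugen4 : uval (gen 4) = B5 := by decide

theorem uval_mul (x y : Gf) : uval (x * y) = uval x * uval y := by
  have key : ∀ y, uval (x * y) = uval x * uval y := by
    refine Subgroup.closure_induction (fun g hg => ?_)
      (fun y => by rw [one_mul, uval_one, one_mul])
      (fun a b _ _ iha ihb y => ?_) (fun a _ iha y => ?_) (hgenmem x)
    · obtain ⟨m, rfl⟩ := hg; exact fun y => huv_gen m y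
    · rw [mul_assoc, iha, ihb, iha b, mul_assoc]
    · have h1 : uval a * uval (a⁻¹ * y) = uval y := by
        rw [← iha, ← mul_assoc, mul_inv_cancel, one_mul]
      have h2 : uval a * uval a⁻¹ = 1 := by rw [← iha, mul_inv_cancel, uval_one]
      have h3 : uval a⁻¹ * uval a = 1 := mul_eq_one_comm.mp h2
      calc uval (a⁻¹ * y) = (uval a⁻¹ * uval a) * uval (a⁻¹ * y) := by rw [h3, one_mul]
        _ = uval a⁻¹ * (uval a * uval (a⁻¹ * y)) := by rw [mul_assoc]
        _ = uval a⁻¹ * uval y := by rw [h1]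
  exact key y

/-! ### The monoid hom into the units of the complex matrix ring -/

/-- The unit of `MZ` with value `uval x`. -/
def ub : Gf →* MZˣ where
  toFun x := ⟨uval x, uval x⁻¹,
    by rw [← uval_mul, mul_inv_cancel, uval_one],
    by rw [← uval_mul, inv_mul_cancel, uval_one]⟩
  map_one' := Units.ext (by simpa using uval_one)
  map_mul' x y := Units.ext (by simpa using uval_mul x y)

abbrev GLC := (Matrix (Fin 4) (Fin 4) ℂ)ˣ

noncomputable def ψm : MZ →+* Matrix (Fin 4) (Fin 4) ℂ := GaussianInt.toComplex.mapMatrix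

lemma ψm_inj : Function.Injective ψm := by
  intro A B h
  apply Matrix.ext
  intro i j
  exact GaussianInt.toComplex_injective (congrFun (congrFun h i) j)

noncomputable def φh : Gf →* GLC := (Units.map ψm.toMonoidHom).comp ub

lemma val_phi (x : Gf) : ((φh x : GLC) : Matrix (Fin 4) (Fin 4) ℂ) = ψm (uval x) := rfl

lemma TcEqB : ψm B1 = T 0 ∧ ψm B2 = T 1 ∧ ψm B3 = T 2 ∧ ψm B4 = T 3 ∧ ψm B5 = T 4 := by
  refine ⟨?_, ?_, ?_, ?_, ?_⟩ <;>
  · apply Matrix.ext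
    intro i j
    fin_cases i <;> fin_cases j <;>
      simp [ψm, RingHom.mapMatrix_apply, Matrix.map_apply, B1, B2, B3, B4, B5, T,
        Matrix.vecHead, Matrix.vecTail, GaussianInt.toComplex_def']

lemma tphi : ∀ m : Fin 5, ((φh (gen m) : GLC) : Matrix (Fin 4) (Fin 4) ℂ) = T m := by
  intro m
  fin_cases m
  · show ((φh (gen 0) : GLC) : Matrix (Fin 4) (Fin 4) ℂ) = T 0
    rw [val_phi, ugen0]; exact TcEqB.1
  · show ((φh (gen 1) : GLC) : Matrix (Fin 4) (Fin 4) ℂ) = T 1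
    rw [val_phi, ugen1]; exact TcEqB.2.1
  · show ((φh (gen 2) : GLC) : Matrix (Fin 4) (Fin 4) ℂ) = T 2
    rw [val_phi, ugen2]; exact TcEqB.2.2.1
  · show ((φh (gen 3) : GLC) : Matrix (Fin 4) (Fin 4) ℂ) = T 3
    rw [val_phi, ugen3]; exact TcEqB.2.2.2.1
  · show ((φh (gen 4) : GLC) : Matrix (Fin 4) (Fin 4) ℂ) = T 4
    rw [val_phi, ugen4]; exact TcEqB.2.2.2.2

lemma phi_inj : Function.Injective φh := by
  rw [injective_iff_map_eq_one]
  intro x hx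
  have h1 : ψm (uval x) = ψm 1 := by
    rw [← val_phi, hx, _root_.map_one]
    rfl
  exact hker x (ψm_inj h1)

lemma mem_gen (m : Fin 5) : φh (gen m) ∈ Ggrp :=
  Subgroup.subset_closure ⟨m, tphi m⟩

lemma mem_phi (x : Gf) : φh x ∈ Ggrp := by
  have hnnm : φh nn ∈ Ggrp := by
    rw [← hnn, _root_.map_mul, _root_.map_mul]
    exact mul_mem (mul_mem (mem_gen 0) (mem_gen 1)) (mul_mem (mem_gen 0) (mem_gen 1))
  rw [dnn x]
  simp only [_root_.map_mul, _root_.map_pow]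
  exact mul_mem (mul_mem (mul_mem (mul_mem (pow_mem hnnm _) (pow_mem (mem_gen 0) _))
    (pow_mem (mem_gen 1) _)) (pow_mem (mem_gen 2) _)) (pow_mem (mem_gen 3) _)

lemma hrange : φh.range = Ggrp := by
  apply le_antisymm
  · rintro g ⟨x, rfl⟩
    exact mem_phi x
  · refine (Subgroup.closure_le _).mpr ?_
    rintro g ⟨m, hm⟩
    exact ⟨gen m, Units.ext (by rw [tphi m, hm])⟩

noncomputable def eqv : Gf ≃* Ggrp :=
  (MonoidHom.ofInjective phi_inj).trans (MulEquiv.subgroupCongr hrange)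

/-- Conjugacy classes correspond along a `MulEquiv`. -/
def cceq {G H : Type*} [Monoid G] [Monoid H] (e : G ≃* H) : ConjClasses G ≃ ConjClasses H :=
  Quotient.congr e.toEquiv (by
    intro a b
    change IsConj a b ↔ IsConj (e a) (e b)
    constructor
    · exact fun h => e.toMonoidHom.map_isConj h
    · intro h
      have h2 := e.symm.toMonoidHom.map_isConj h
      simpa using h2)

/-! ### Conjugation facts -/

lemma val_phi_nn (x : Gf) :
    ((φh (nn * x) : GLC) : Matrix (Fin 4) (Fin 4) ℂ) = -((φh x : GLC) : Matrix (Fin 4) (Fin 4) ℂ) := by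
  rw [val_phi, val_phi, uval_mul, uval_nn, neg_one_mul, _root_.map_neg]

lemma cen (u : GLC) : u * φh nn = φh nn * u := by
  apply Units.ext
  have h1 : ((φh nn : GLC) : Matrix (Fin 4) (Fin 4) ℂ) = -1 := by
    have := val_phi_nn 1
    rw [mul_one, _root_.map_one] at this
    simpa using this
  show (u : Matrix (Fin 4) (Fin 4) ℂ) * _ = (_ : Matrix (Fin 4) (Fin 4) ℂ) * _
  rw [h1, mul_neg_one, neg_one_mul]

lemma conj_push (a b X : GLC) : a * (φh nn * X) * b = φh nn * (a * X * b) := by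
  rw [← mul_assoc a, cen a, mul_assoc (φh nn), mul_assoc (φh nn)]

lemma swap_phi (w : Gf) (X : GLC) (h : X = φh w ∨ X = φh (nn * w)) :
    φh nn * X = φh w ∨ φh nn * X = φh (nn * w) := by
  rcases h with h | h
  · right; rw [h, ← _root_.map_mul]
  · left; rw [h, ← _root_.map_mul, ← mul_assoc, nnsq, one_mul]

lemma conj_main (w : Gf)
    (hw : ∀ k : Fin 5, gen k * w * (gen k)⁻¹ = w ∨ gen k * w * (gen k)⁻¹ = nn * w) :
    ∀ g : GLC, g ∈ Ggrp → g * φh w * g⁻¹ = φh w ∨ g * φh w * g⁻¹ = φh (nn * w) := by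
  intro g hg
  refine Subgroup.closure_induction (fun h hh => ?_) ?_
    (fun a b _ _ iha ihb => ?_) (fun a _ iha => ?_) hg
  · obtain ⟨k, hk⟩ := hh
    have hhk : h = φh (gen k) := Units.ext (by rw [hk, tphi k])
    rw [hhk, ← _root_.map_inv, ← _root_.map_mul, ← _root_.map_mul]
    rcases hw k with h1 | h1
    · left; rw [h1]
    · right; rw [h1]
  · left; rw [one_mul, inv_one, mul_one]
  · have e1 : a * b * φh w * (a * b)⁻¹ = a * (b * φh w * b⁻¹) * a⁻¹ := by group
    rcases ihb with h1 | h1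
    · rw [e1, h1]; exact iha
    · rw [e1, h1]
      have h2 : a * φh (nn * w) * a⁻¹ = φh nn * (a * φh w * a⁻¹) := by
        rw [_root_.map_mul φh nn w, conj_push]
      rw [h2]
      exact swap_phi w _ iha
  · rcases iha with h1 | h1
    · left
      calc a⁻¹ * φh w * a⁻¹⁻¹ = a⁻¹ * (a * φh w * a⁻¹) * a := by rw [h1, inv_inv]
        _ = φh w := by group
    · right
      have hww : nn * (nn * w) = w := by rw [← mul_assoc, nnsq, one_mul]
      calc a⁻¹ * φh w * a⁻¹⁻¹
          = a⁻¹ * (φh nn * φh (nn * w)) * a := by rw [inv_inv, ← _root_.map_mul, hww]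
        _ = φh nn * (a⁻¹ * φh (nn * w) * a) := conj_push _ _ _
        _ = φh nn * (a⁻¹ * (a * φh w * a⁻¹) * a) := by rw [h1]
        _ = φh nn * φh w := by group
        _ = φh (nn * w) := (_root_.map_mul _ _ _).symm

end AuxCliff

/-- `G` has exactly 17 conjugacy classes: `{I}`, `{-I}`, the five classes
`{T m, -T m}` and the ten classes `{T m * T n, -(T m * T n)}` for `m < n`. -/
theorem stmt4 :
    Nat.card (ConjClasses Ggrp) = 17 ∧
    (∀ u : Ggrp, mat u = 1 →
      {x : Matrix (Fin 4) (Fin 4) ℂ | ∃ v : Ggrp, IsConj u v ∧ mat v = x} = {1}) ∧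
    (∀ u : Ggrp, mat u = -1 →
      {x : Matrix (Fin 4) (Fin 4) ℂ | ∃ v : Ggrp, IsConj u v ∧ mat v = x} = {-1}) ∧
    (∀ m : Fin 5, ∀ u : Ggrp, mat u = T m →
      {x : Matrix (Fin 4) (Fin 4) ℂ | ∃ v : Ggrp, IsConj u v ∧ mat v = x} = {T m, -(T m)}) ∧
    (∀ m n : Fin 5, m < n → ∀ u : Ggrp, mat u = T m * T n →
      {x : Matrix (Fin 4) (Fin 4) ℂ | ∃ v : Ggrp, IsConj u v ∧ mat v = x}
        = {T m * T n, -(T m * T n)}) := by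
  constructor
  · have h : Nat.card (ConjClasses Ggrp) = Nat.card (ConjClasses Gf) :=
      Nat.card_congr (cceq eqv.symm)
    rw [h]
    exact Gf.card17
  refine ⟨?_, ?_, ?_, ?_⟩
  · -- class of the identity
    intro u hu
    have hu1 : u = 1 := Subtype.ext (Units.ext (by exact hu))
    subst hu1
    ext x
    simp only [Set.mem_setOf_eq, Set.mem_singleton_iff]
    constructor
    · rintro ⟨v, hcj, rfl⟩
      obtain ⟨c, hc⟩ := isConj_iff.mp hcj
      rw [← hc, mul_one, mul_inv_cancel]
      rfl
    · rintro rfl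
      exact ⟨1, IsConj.refl 1, hu⟩
  · -- class of -1
    intro u hu
    have hu0 : (u : GLC) = -1 := Units.ext (by rw [Units.val_neg, Units.val_one]; exact hu)
    ext x
    simp only [Set.mem_setOf_eq, Set.mem_singleton_iff]
    constructor
    · rintro ⟨v, hcj, rfl⟩
      obtain ⟨c, hc⟩ := isConj_iff.mp hcj
      have hm : mat v = (((c : GLC) * (u : GLC) * (c : GLC)⁻¹ : GLC) : Matrix (Fin 4) (Fin 4) ℂ) := by
        rw [← hc]; rfl
      rw [hm, hu0]
      have h2 : ((c : GLC) * -1 * (c : GLC)⁻¹ : GLC) = -1 := by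
        rw [mul_neg_one, neg_mul, mul_inv_cancel]
      rw [h2]
      simp
    · rintro rfl
      exact ⟨u, IsConj.refl u, hu⟩
  · -- class of T m
    intro m u hu
    have hu0 : (u : GLC) = φh (gen m) := Units.ext (by rw [tphi m]; exact hu)
    ext x
    simp only [Set.mem_setOf_eq, Set.mem_insert_iff, Set.mem_singleton_iff]
    constructor
    · rintro ⟨v, hcj, rfl⟩
      obtain ⟨c, hc⟩ := isConj_iff.mp hcj
      have hm : mat v = (((c : GLC) * (u : GLC) * (c : GLC)⁻¹ : GLC) : Matrix (Fin 4) (Fin 4) ℂ) := by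
        rw [← hc]; rfl
      rw [hm, hu0]
      rcases conj_main (gen m) (fun k => hconj1 k m) (c : GLC) c.2 with h | h
      · left; rw [h]; exact tphi m
      · right; rw [h, val_phi_nn, tphi m]
    · rintro (rfl | rfl)
      · exact ⟨u, IsConj.refl u, hu⟩
      · obtain ⟨k, hk⟩ := hflip1 m
        refine ⟨(⟨φh (gen k), mem_gen k⟩ : Ggrp) * u * (⟨φh (gen k), mem_gen k⟩ : Ggrp)⁻¹,
          isConj_iff.mpr ⟨_, rfl⟩, ?_⟩
        have hm : mat ((⟨φh (gen k), mem_gen k⟩ : Ggrp) * u * (⟨φh (gen k), mem_gen k⟩ : Ggrp)⁻¹)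
            = ((φh (gen k) * (u : GLC) * (φh (gen k))⁻¹ : GLC) : Matrix (Fin 4) (Fin 4) ℂ) := rfl
        rw [hm, hu0, ← _root_.map_inv, ← _root_.map_mul, ← _root_.map_mul, hk, val_phi_nn, tphi m]
  · -- class of T m * T n
    intro m n hmn u hu
    have hne : m ≠ n := ne_of_lt hmn
    have tphi2 : ((φh (gen m * gen n) : GLC) : Matrix (Fin 4) (Fin 4) ℂ) = T m * T n := by
      rw [_root_.map_mul, Units.val_mul, tphi, tphi]
    have hu0 : (u : GLC) = φh (gen m * gen n) := Units.ext (by rw [tphi2]; exact hu)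
    ext x
    simp only [Set.mem_setOf_eq, Set.mem_insert_iff, Set.mem_singleton_iff]
    constructor
    · rintro ⟨v, hcj, rfl⟩
      obtain ⟨c, hc⟩ := isConj_iff.mp hcj
      have hm : mat v = (((c : GLC) * (u : GLC) * (c : GLC)⁻¹ : GLC) : Matrix (Fin 4) (Fin 4) ℂ) := by
        rw [← hc]; rfl
      rw [hm, hu0]
      rcases conj_main (gen m * gen n) (fun k => hconj2 k m n) (c : GLC) c.2 with h | h
      · left; rw [h]; exact tphi2
      · right; rw [h, val_phi_nn, tphi2]
    · rintro (rfl | rfl)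
      · exact ⟨u, IsConj.refl u, hu⟩
      · obtain ⟨k, hk⟩ := hflip2 m n hne
        refine ⟨(⟨φh (gen k), mem_gen k⟩ : Ggrp) * u * (⟨φh (gen k), mem_gen k⟩ : Ggrp)⁻¹,
          isConj_iff.mpr ⟨_, rfl⟩, ?_⟩
        have hm : mat ((⟨φh (gen k), mem_gen k⟩ : Ggrp) * u * (⟨φh (gen k), mem_gen k⟩ : Ggrp)⁻¹)
            = ((φh (gen k) * (u : GLC) * (φh (gen k))⁻¹ : GLC) : Matrix (Fin 4) (Fin 4) ℂ) := rfl
        rw [hm, hu0, ← _root_.map_inv, ← _root_.map_mul, ← _root_.map_mul, hk, val_phi_nn, tphi2]
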